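/- Consider realizing a directed graph D via non-strict temporal paths (or via a proper labeling) on an undirected temporal graph. Let v and w be two vertices that, in the solid graph G of D, each have degree 1 and are both adjacent to the same vertex u, and suppose (v,w) ∉ A and (w,v) ∉ A. Then D is not realizable: there is no undirected temporal graph whose non-strict reachability relation equals A (and no proper labeling realizing A). -/
import Mathlib


/-- Strict temporal reachability: `SReach lab u v t` means there is a walk from `u` to `v`
whose steps carry strictly increasing labels, arriving at time `t`. -/
inductive SReach {V : Type*} (lab : V → V → Finset ℕ) : V → V → ℕ → Prop
  | single {u v : V} {t : ℕ} (h : t ∈ lab u v) : SReach lab u v t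
  | cons {u v w : V} {t t' : ℕ} (h : SReach lab u v t) (h' : t' ∈ lab v w) (hlt : t < t') :
      SReach lab u w t'

/-- `u` can reach `v` via a strict temporal path. -/
def StrictReachable {V : Type*} (lab : V → V → Finset ℕ) (u v : V) : Prop :=
  ∃ t, SReach lab u v t

/-- Non-strict temporal reachability: labels are non-decreasing along the walk. -/
inductive NSReach {V : Type*} (lab : V → V → Finset ℕ) : V → V → ℕ → Prop
  | single {u v : V} {t : ℕ} (h : t ∈ lab u v) : NSReach lab u v t
  | cons {u v w : V} {t t' : ℕ} (h : NSReach lab u v t) (h' : t' ∈ lab v w) (hle : t ≤ t') :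
      NSReach lab u w t'

/-- `u` can reach `v` via a non-strict temporal path. -/
def NonStrictReachable {V : Type*} (lab : V → V → Finset ℕ) (u v : V) : Prop :=
  ∃ t, NSReach lab u v t


lemma firstNS {V : Type*} {lab : V → V → Finset ℕ} {v u : V}
    (hv : ∀ y, (lab v y).Nonempty → y = u) :
    ∀ {z t}, NSReach lab v z t → ∃ s, s ∈ lab v u := by
  intro z t h
  induction h with
  | single h => have := hv _ ⟨_, h⟩; subst this; exact ⟨_, h⟩
  | cons h h' hle ih => exact ih

lemma firstS {V : Type*} {lab : V → V → Finset ℕ} {v u : V}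
    (hv : ∀ y, (lab v y).Nonempty → y = u) :
    ∀ {z t}, SReach lab v z t → ∃ s, s ∈ lab v u := by
  intro z t h
  induction h with
  | single h => have := hv _ ⟨_, h⟩; subst this; exact ⟨_, h⟩
  | cons h h' hlt ih => exact ih

/-- If two pendant vertices `v, w` of the solid graph are both attached to the same vertex `u`
and no arc joins `v` and `w`, then `D` is not realizable non-strictly, nor by a proper
labeling (with strict reachability). -/
theorem stmt10 {V : Type*} (A : V → V → Prop)
    (u v w : V) (hvw : v ≠ w)
    (hvu : v ≠ u ∧ A v u ∧ A u v)
    (hwu : w ≠ u ∧ A w u ∧ A u w)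
    (hdegv : ∀ x, (v ≠ x ∧ A v x ∧ A x v) → x = u)
    (hdegw : ∀ x, (w ≠ x ∧ A w x ∧ A x w) → x = u)
    (hnA : ¬ A v w) (hnA' : ¬ A w v) :
    (¬ ∃ lab : V → V → Finset ℕ,
        (∀ x y, lab x y = lab y x) ∧
        (∀ x y, (lab x y).Nonempty → (x ≠ y ∧ A x y ∧ A y x)) ∧
        (∀ x y, A x y ↔ x ≠ y ∧ NonStrictReachable lab x y)) ∧
    (¬ ∃ lab : V → V → Finset ℕ,
        (∀ x y, lab x y = lab y x) ∧
        (∀ x y, (lab x y).Nonempty → (x ≠ y ∧ A x y ∧ A y x)) ∧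
        (∀ x y z t, t ∈ lab x y → t ∈ lab x z → y = z) ∧
        (∀ x y, A x y ↔ x ≠ y ∧ StrictReachable lab x y)) := by
  constructor
  · rintro ⟨lab, hsym, hne, hreach⟩
    have hv : ∀ y, (lab v y).Nonempty → y = u := fun y hy => hdegv y (hne v y hy)
    have hw : ∀ y, (lab w y).Nonempty → y = u := fun y hy => hdegw y (hne w y hy)
    obtain ⟨tvu, hrv⟩ := ((hreach v u).1 hvu.2.1).2
    obtain ⟨tv, htv⟩ := firstNS hv hrv
    obtain ⟨twu, hrw⟩ := ((hreach w u).1 hwu.2.1).2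
    obtain ⟨tw, htw⟩ := firstNS hw hrw
    have htw' : tw ∈ lab u w := by rw [hsym u w]; exact htw
    have htv' : tv ∈ lab u v := by rw [hsym u v]; exact htv
    rcases le_total tv tw with hle | hle
    · exact hnA ((hreach v w).2 ⟨hvw, tw, NSReach.cons (NSReach.single htv) htw' hle⟩)
    · exact hnA' ((hreach w v).2 ⟨hvw.symm, tv, NSReach.cons (NSReach.single htw) htv' hle⟩)
  · rintro ⟨lab, hsym, hne, hprop, hreach⟩
    have hv : ∀ y, (lab v y).Nonempty → y = u := fun y hy => hdegv y (hne v y hy)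
    have hw : ∀ y, (lab w y).Nonempty → y = u := fun y hy => hdegw y (hne w y hy)
    obtain ⟨tvu, hrv⟩ := ((hreach v u).1 hvu.2.1).2
    obtain ⟨tv, htv⟩ := firstS hv hrv
    obtain ⟨twu, hrw⟩ := ((hreach w u).1 hwu.2.1).2
    obtain ⟨tw, htw⟩ := firstS hw hrw
    have htw' : tw ∈ lab u w := by rw [hsym u w]; exact htw
    have htv' : tv ∈ lab u v := by rw [hsym u v]; exact htv
    have hne' : tv ≠ tw := fun h => hvw (hprop u v w tv htv' (h ▸ htw'))
    rcases hne'.lt_or_gt with hlt | hlt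
    · exact hnA ((hreach v w).2 ⟨hvw, tw, SReach.cons (SReach.single htv) htw' hlt⟩)
    · exact hnA' ((hreach w v).2 ⟨hvw.symm, tv, SReach.cons (SReach.single htw) htv' hlt⟩)
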